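/- Let N ≥ 2 and consider an N-player quadratic game with symmetric matrices Q_1, …, Q_N ∈ ℝ^(N×N), vectors b_1, …, b_N ∈ ℝ^N, scalars p_1, …, p_N, and costs J_i(x) = ½xᵀQ_i x + b_iᵀx + p_i. Let 𝒬 ∈ ℝ^(N×N) have i-th row equal to (Q_i)_{i:} and ℬ ∈ ℝ^N have i-th entry (b_i)_i, and assume 𝒬 is invertible with x* := −𝒬^{-1}ℬ. Fix an index d ≠ 1 (player 1 deceives player d), and let Q̄ ∈ ℝ^(N×N) be the matrix whose d-th row is (Q_d)_{1:} and all other rows zero, and B̄ ∈ ℝ^N the vector whose d-th entry is (b_d)_1 and all other entries zero; set Q_δ := 𝒬 + δQ̄ and B_δ := ℬ + δB̄ for δ ∈ ℝ. Assume the (N−1)×(N−1) matrix [𝒬]^{d,1} obtained from 𝒬 by deleting row d and column 1 is invertible. Define Φ ∈ ℝ^N by Φ_1 = 1 and (Φ_2,…,Φ_N)ᵀ = −([𝒬]^{d,1})^{-1} v, where v is the first column of the matrix obtained from 𝒬 by deleting only row d; and define q_1 := −((b_d)_1 + (Q_d)_{1:} x*), q_2 := (Q_d)_{1:} Φ, q_3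 := (Q_d)_{d:} Φ. Then for every δ ∈ ℝ such that q_2 δ + q_3 ≠ 0 and Q_δ is invertible, the point x_δ := −Q_δ^{-1} B_δ satisfies x_δ − x* = f(δ)·Φ with f(δ) := q_1 δ / (q_2 δ + q_3), and consequently, for every i ∈ {1,…,N}, J_i(x_δ) = r_{i,2} f(δ)² + r_{i,1} f(δ) + J_i(x*), where r_{i,2} := ½ ΦᵀQ_iΦ and r_{i,1} := (Q_i x* + b_i)ᵀΦ. -/

import Mathlib

open Matrix

theorem stmt4 (n : ℕ)
    -- N-player quadratic game, N = n + 2 ≥ 2; "player 1" is index 0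
    (Q : Fin (n+2) → Matrix (Fin (n+2)) (Fin (n+2)) ℝ)
    (b : Fin (n+2) → Fin (n+2) → ℝ) (p : Fin (n+2) → ℝ)
    (hsym : ∀ i, (Q i).IsSymm)
    (J : Fin (n+2) → (Fin (n+2) → ℝ) → ℝ)
    (hJ : ∀ i x, J i x = (1/2) * (x ⬝ᵥ ((Q i).mulVec x)) + (b i) ⬝ᵥ x + p i)
    (𝒬 : Matrix (Fin (n+2)) (Fin (n+2)) ℝ)
    (h𝒬 : 𝒬 = Matrix.of fun i j => Q i i j)
    (ℬ : Fin (n+2) → ℝ) (hℬ : ℬ = fun i => b i i)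
    (h𝒬inv : IsUnit 𝒬.det)
    (xstar : Fin (n+2) → ℝ) (hxstar : xstar = -(𝒬⁻¹.mulVec ℬ))
    (d : Fin (n+2)) (hd : d ≠ 0)
    (Qbar : Matrix (Fin (n+2)) (Fin (n+2)) ℝ)
    (hQbar : Qbar = Matrix.of fun i j => if i = d then Q d 0 j else 0)
    (Bbar : Fin (n+2) → ℝ)
    (hBbar : Bbar = fun i => if i = d then b d 0 else 0)
    -- the matrix [𝒬]^{d,1} : delete row d and the first column
    (M : Matrix (Fin (n+1)) (Fin (n+1)) ℝ)
    (hM : M = 𝒬.submatrix d.succAbove Fin.succ)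
    (hMinv : IsUnit M.det)
    -- first column of 𝒬 with row d deleted
    (v : Fin (n+1) → ℝ) (hv : v = fun i => 𝒬 (d.succAbove i) 0)
    (Φ : Fin (n+2) → ℝ)
    (hΦ : Φ = Fin.cons 1 (fun j => -((M⁻¹.mulVec v) j)))
    (q1 q2 q3 : ℝ)
    (hq1 : q1 = -(b d 0 + (Q d 0) ⬝ᵥ xstar))
    (hq2 : q2 = (Q d 0) ⬝ᵥ Φ)
    (hq3 : q3 = (Q d d) ⬝ᵥ Φ)
    (δ : ℝ) (hδ : q2 * δ + q3 ≠ 0)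
    (Qδ : Matrix (Fin (n+2)) (Fin (n+2)) ℝ) (hQδ : Qδ = 𝒬 + δ • Qbar)
    (Bδ : Fin (n+2) → ℝ) (hBδ : Bδ = ℬ + δ • Bbar)
    (hQδinv : IsUnit Qδ.det)
    (xδ : Fin (n+2) → ℝ) (hxδ : xδ = -(Qδ⁻¹.mulVec Bδ)) :
    xδ - xstar = (q1 * δ / (q2 * δ + q3)) • Φ ∧
    ∀ i, J i xδ =
        ((1/2) * (Φ ⬝ᵥ ((Q i).mulVec Φ))) * (q1 * δ / (q2 * δ + q3))^2 +
        (((Q i).mulVec xstar + b i) ⬝ᵥ Φ) * (q1 * δ / (q2 * δ + q3)) +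
        J i xstar := by
  set f : ℝ := q1 * δ / (q2 * δ + q3) with hf
  -- 𝒬 xstar = -ℬ
  have hQx : 𝒬.mulVec xstar = -ℬ := by
    rw [hxstar, Matrix.mulVec_neg, Matrix.mulVec_mulVec,
      Matrix.mul_nonsing_inv _ h𝒬inv, Matrix.one_mulVec]
  -- Qbar.mulVec
  have hQbarmul : ∀ x : Fin (n+2) → ℝ, Qbar.mulVec x
      = fun i => if i = d then (Q d 0) ⬝ᵥ x else 0 := by
    intro x
    funext i
    subst hQbar
    simp only [Matrix.mulVec, dotProduct, Matrix.of_apply]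
    split <;> simp [dotProduct]
  -- (𝒬 Φ) i = 0 for i ≠ d
  have hMy : M.mulVec (fun j => -((M⁻¹.mulVec v) j)) = -v := by
    have : M.mulVec (-(M⁻¹.mulVec v)) = -v := by
      rw [Matrix.mulVec_neg, Matrix.mulVec_mulVec,
        Matrix.mul_nonsing_inv _ hMinv, Matrix.one_mulVec]
    exact this
  have hΦ0 : ∀ i, i ≠ d → (𝒬.mulVec Φ) i = 0 := by
    intro i hi
    obtain ⟨k, rfl⟩ := Fin.exists_succAbove_eq hi
    have hMe : ∀ j : Fin (n+1), 𝒬 (d.succAbove k) j.succ = M k j := by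
      intro j; rw [hM]; rfl
    have hk := congrFun hMy k
    simp only [Matrix.mulVec, dotProduct] at hk
    rw [show (𝒬.mulVec Φ) (d.succAbove k) = ∑ j, 𝒬 (d.succAbove k) j * Φ j from rfl,
      Fin.sum_univ_succ]
    simp only [hΦ, Fin.cons_zero, Fin.cons_succ, mul_one, hMe,
      Matrix.mulVec, dotProduct]
    rw [hk, hv]
    simp
  have hΦd : (𝒬.mulVec Φ) d = q3 := by
    rw [hq3]
    simp [Matrix.mulVec, dotProduct, h𝒬]
  -- the key identity
  have key : Qδ.mulVec (xstar + f • Φ) = -Bδ := by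
    funext i
    have hQd0 : ∀ j, 𝒬 d j = Q d d j := by intro j; rw [h𝒬]; rfl
    rw [hQδ, hBδ]
    simp only [Matrix.add_mulVec, Matrix.smul_mulVec, Matrix.mulVec_add,
      Matrix.mulVec_smul, Pi.add_apply, Pi.smul_apply, Pi.neg_apply,
      smul_eq_mul, hQbarmul, hBbar, hQx]
    have hfe : f * (q2 * δ + q3) = q1 * δ := div_mul_cancel₀ _ hδ
    by_cases hid : i = d
    · subst hid
      simp only [if_pos rfl, if_true, eq_self_iff_true, hΦd]
      linear_combination hfe + δ * hq1 - f * δ * hq2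
    · simp only [if_neg hid, hΦ0 i hid]
      ring
  have hxeq : xδ = xstar + f • Φ := by
    rw [hxδ, ← Matrix.mulVec_neg, ← key, Matrix.mulVec_mulVec, Matrix.nonsing_inv_mul _ hQδinv,
      Matrix.one_mulVec]
  refine ⟨by rw [hxeq]; abel, fun i => ?_⟩
  have hcomm : xstar ⬝ᵥ (Q i).mulVec Φ = Φ ⬝ᵥ (Q i).mulVec xstar := by
    rw [Matrix.dotProduct_mulVec, ← Matrix.mulVec_transpose, (hsym i).eq,
      dotProduct_comm]
  rw [hJ, hJ, hxeq]
  simp only [Matrix.mulVec_add, Matrix.mulVec_smul, dotProduct_add,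
    add_dotProduct, dotProduct_smul, smul_dotProduct,
    smul_eq_mul]
  rw [hcomm, dotProduct_comm ((Q i).mulVec xstar) Φ]
  ring
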